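/- Let F_n be the number of 3-bounded anchored permutations of [n], G_n the number of 3-bounded permutations π of [n] with π(1) ∈ {1,2} and π(n) = n, and H_n the number of 3-bounded permutations π of [n] with π(1) = 3, π(n) = n, whose first five entries are not 3,1,4,2,5. Then for all n ≥ 6, H_n = F_{n-3} + G_{n-3} + F_{n-4} + G_{n-5} + H_{n-3}. -/

import Mathlib

/-- A permutation of `Fin n` (representing `{1,…,n}` zero-indexed) is `k`-bounded
if consecutive entries differ by at most `k`. -/
def IsKBounded (k n : ℕ) (π : Equiv.Perm (Fin n)) : Prop :=
  ∀ i j : Fin n, (j : ℕ) = (i : ℕ) + 1 →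
    (((π j : ℕ) : ℤ) - ((π i : ℕ) : ℤ)).natAbs ≤ k

/-- Anchored: first entry is `1` and last entry is `n` (zero-indexed: fixes `0` and `n-1`). -/
def IsAnchored (n : ℕ) (π : Equiv.Perm (Fin n)) : Prop :=
  ∀ i : Fin n, ((i : ℕ) = 0 → π i = i) ∧ ((i : ℕ) = n - 1 → π i = i)

/-- The number of `k`-bounded anchored permutations of `{1,…,n}`. -/
noncomputable def numAnchored (k n : ℕ) : ℕ :=
  Nat.card {π : Equiv.Perm (Fin n) // IsKBounded k n π ∧ IsAnchored n π}

/-- `numF n` = number of 3-bounded anchored permutations of `{1,…,n}`. -/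
noncomputable def numF (n : ℕ) : ℕ := numAnchored 3 n

/-- `numG n` = number of 3-bounded permutations of `{1,…,n}` starting at `1` or `2`
(zero-indexed value `0` or `1`) and ending at `n`. -/
noncomputable def numG (n : ℕ) : ℕ :=
  Nat.card {π : Equiv.Perm (Fin n) // IsKBounded 3 n π ∧
    (∀ i : Fin n, (i : ℕ) = 0 → ((π i : ℕ) = 0 ∨ (π i : ℕ) = 1)) ∧
    (∀ i : Fin n, (i : ℕ) = n - 1 → π i = i)}

/-- The first five entries are the Joker `3,1,4,2,5` (zero-indexed values `2,0,3,1,4`). -/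
def StartsWithJoker (n : ℕ) (π : Equiv.Perm (Fin n)) : Prop :=
  ∃ h : 5 ≤ n, (π ⟨0, by omega⟩ : ℕ) = 2 ∧ (π ⟨1, by omega⟩ : ℕ) = 0 ∧
    (π ⟨2, by omega⟩ : ℕ) = 3 ∧ (π ⟨3, by omega⟩ : ℕ) = 1 ∧ (π ⟨4, by omega⟩ : ℕ) = 4

/-- `numH n` = number of 3-bounded permutations of `{1,…,n}` starting at `3`
(zero-indexed value `2`), ending at `n`, and not starting with the Joker. -/
noncomputable def numH (n : ℕ) : ℕ :=
  Nat.card {π : Equiv.Perm (Fin n) // IsKBounded 3 n π ∧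
    (∀ i : Fin n, (i : ℕ) = 0 → (π i : ℕ) = 2) ∧
    (∀ i : Fin n, (i : ℕ) = n - 1 → π i = i) ∧ ¬ StartsWithJoker n π}


namespace HRec


def Bnd (n : ℕ) (f : ℕ → ℕ) : Prop := ∀ j, j + 2 ≤ n → f j ≤ f (j+1) + 3 ∧ f (j+1) ≤ f j + 3

structure Spec (n : ℕ) (f : ℕ → ℕ) : Prop where
  lt : ∀ j, j < n → f j < n
  inj : ∀ i, i < n → ∀ j, j < n → f i = f j → i = j
  surj : ∀ v, v < n → ∃ j, j < n ∧ f j = v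
  bnd : Bnd n f

def pf (n : ℕ) (π : Equiv.Perm (Fin n)) : ℕ → ℕ := fun j => if h : j < n then π ⟨j, h⟩ else j

lemma pf_apply (n : ℕ) (π : Equiv.Perm (Fin n)) (j : ℕ) (h : j < n) :
    pf n π j = π ⟨j, h⟩ := dif_pos h

lemma pf_spec (n : ℕ) (π : Equiv.Perm (Fin n)) (hb : IsKBounded 3 n π) : Spec n (pf n π) := by
  refine ⟨?_, ?_, ?_, ?_⟩
  · intro j hj; rw [pf_apply n π j hj]; exact (π ⟨j, hj⟩).2
  · intro i hi j hj hij
    rw [pf_apply n π i hi, pf_apply n π j hj] at hij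
    have := π.injective (Fin.ext hij : π ⟨i, hi⟩ = π ⟨j, hj⟩)
    exact congrArg Fin.val this
  · intro v hv
    refine ⟨π.symm ⟨v, hv⟩, (π.symm ⟨v, hv⟩).2, ?_⟩
    rw [pf_apply n π _ (π.symm ⟨v, hv⟩).2]
    simp
  · intro j hj
    have := hb ⟨j, by omega⟩ ⟨j+1, by omega⟩ rfl
    rw [pf_apply n π j (by omega), pf_apply n π (j+1) (by omega)]
    omega

noncomputable def mkPerm (n : ℕ) (f : ℕ → ℕ) (h1 : ∀ j, j < n → f j < n)
    (h2 : ∀ i, i < n → ∀ j, j < n → f i = f j → i = j) : Equiv.Perm (Fin n) :=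
  Equiv.ofBijective (fun i => ⟨f i, h1 i i.2⟩)
    (Finite.injective_iff_bijective.mp (fun i j hij =>
      Fin.ext (h2 i i.2 j j.2 (congrArg Fin.val hij))))

lemma mkPerm_apply (n f h1 h2) (i : Fin n) : (mkPerm n f h1 h2 i : ℕ) = f i := rfl

lemma mkPerm_bounded (n f h1 h2) (hb : Bnd n f) : IsKBounded 3 n (mkPerm n f h1 h2) := by
  intro i j hij
  rw [mkPerm_apply, mkPerm_apply]
  have hj := j.2
  have := hb i (by omega)
  rw [hij]
  omega

lemma pf_mkPerm (n f h1 h2) (j : ℕ) (hj : j < n) : pf n (mkPerm n f h1 h2) j = f j := by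
  rw [pf_apply n _ j hj]; rfl

/-- prefix of length `k` given by `pre`, then shifted copy of `g`. -/
def glueF (k : ℕ) (pre : ℕ → ℕ) (g : ℕ → ℕ) (n : ℕ) : ℕ → ℕ := fun j =>
  if j < k then pre j else if j < n then g (j - k) + k else j

lemma glueF_pre (k pre g n j) (h : j < k) : glueF k pre g n j = pre j := if_pos h

lemma glueF_tail (k pre g n j) (h1 : k ≤ j) (h2 : j < n) :
    glueF k pre g n j = g (j - k) + k := by
  unfold glueF; rw [if_neg (by omega), if_pos h2]

lemma glueF_spec (k n : ℕ) (pre g : ℕ → ℕ) (hk : 1 ≤ k) (hkn : k < n)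
    (hp1 : ∀ j, j < k → pre j < k)
    (hp2 : ∀ i, i < k → ∀ j, j < k → pre i = pre j → i = j)
    (hp3 : ∀ v, v < k → ∃ j, j < k ∧ pre j = v)
    (hpb : ∀ j, j + 2 ≤ k → pre j ≤ pre (j+1) + 3 ∧ pre (j+1) ≤ pre j + 3)
    (hbd : pre (k-1) ≤ g 0 + k + 3 ∧ g 0 + k ≤ pre (k-1) + 3)
    (hg : Spec (n-k) g) : Spec n (glueF k pre g n) := by
  refine ⟨?_, ?_, ?_, ?_⟩
  · intro j hj
    by_cases h : j < k
    · rw [glueF_pre _ _ _ _ _ h]; have := hp1 j h; omega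
    · rw [glueF_tail _ _ _ _ _ (by omega) hj]
      have := hg.lt (j - k) (by omega); omega
  · intro i hi j hj hij
    by_cases h1 : i < k <;> by_cases h2 : j < k
    · rw [glueF_pre _ _ _ _ _ h1, glueF_pre _ _ _ _ _ h2] at hij
      exact hp2 i h1 j h2 hij
    · rw [glueF_pre _ _ _ _ _ h1, glueF_tail _ _ _ _ _ (by omega) hj] at hij
      have := hp1 i h1; omega
    · rw [glueF_tail _ _ _ _ _ (by omega) hi, glueF_pre _ _ _ _ _ h2] at hij
      have := hp1 j h2; omega
    · rw [glueF_tail _ _ _ _ _ (by omega) hi, glueF_tail _ _ _ _ _ (by omega) hj] at hij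
      have := hg.inj (i - k) (by omega) (j - k) (by omega) (by omega)
      omega
  · intro v hv
    by_cases h : v < k
    · obtain ⟨j, hj, hjv⟩ := hp3 v h
      exact ⟨j, by omega, by rw [glueF_pre _ _ _ _ _ hj]; exact hjv⟩
    · obtain ⟨i, hi, hiv⟩ := hg.surj (v - k) (by omega)
      refine ⟨i + k, by omega, ?_⟩
      rw [glueF_tail _ _ _ _ _ (by omega) (by omega)]
      simp only [Nat.add_sub_cancel]
      omega
  · intro j hj
    by_cases h1 : j + 2 ≤ k
    · rw [glueF_pre _ _ _ _ _ (by omega), glueF_pre _ _ _ _ _ (by omega)]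
      exact hpb j h1
    · by_cases h2 : j + 1 = k
      · rw [glueF_pre _ _ _ _ _ (by omega), glueF_tail _ _ _ _ (j+1) (by omega) (by omega)]
        have : j = k - 1 := by omega
        rw [this]
        have h0 : k - 1 + 1 - k = 0 := by omega
        rw [h0]
        omega
      · rw [glueF_tail _ _ _ _ _ (by omega) (by omega),
          glueF_tail _ _ _ _ _ (by omega) (by omega)]
        have hb := hg.bnd (j - k) (by omega)
        have : j + 1 - k = (j - k) + 1 := by omega
        rw [this]
        omega

/-- insert the pair of values `g p, g (p+1)` (which are `{0,1}`) after position `p+1`,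
prepend value 2, shift everything else by 3. -/
def insF (p : ℕ) (g : ℕ → ℕ) (n : ℕ) : ℕ → ℕ := fun j =>
  if j = 0 then 2 else if j ≤ p + 1 then g (j-1) + 3
  else if j = p + 2 then g p else if j = p + 3 then g (p+1)
  else if j < n then g (j - 3) + 3 else j

variable {p n : ℕ} {g : ℕ → ℕ}

lemma insF_0 : insF p g n 0 = 2 := rfl
lemma insF_mid (j : ℕ) (h1 : 1 ≤ j) (h2 : j ≤ p + 1) : insF p g n j = g (j-1) + 3 := by
  unfold insF; rw [if_neg (by omega), if_pos h2]
lemma insF_p2 : insF p g n (p+2) = g p := by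
  unfold insF; rw [if_neg (by omega), if_neg (by omega), if_pos rfl]
lemma insF_p3 : insF p g n (p+3) = g (p+1) := by
  unfold insF; rw [if_neg (by omega), if_neg (by omega), if_neg (by omega), if_pos rfl]
lemma insF_tail (j : ℕ) (h1 : p + 4 ≤ j) (h2 : j < n) : insF p g n j = g (j-3) + 3 := by
  unfold insF
  rw [if_neg (by omega), if_neg (by omega), if_neg (by omega), if_neg (by omega), if_pos h2]

lemma insF_spec (hg : Spec (n-3) g) (hn : 6 ≤ n) (hp1 : 1 ≤ p) (hp2 : p + 3 ≤ n - 3)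
    (pair : (g p = 0 ∧ g (p+1) = 1) ∨ (g p = 1 ∧ g (p+1) = 0))
    (hg0 : g 0 = 2) : Spec n (insF p g n) := by
  have hgp : g p ≤ 1 ∧ g (p+1) ≤ 1 ∧ g p ≠ g (p+1) := by rcases pair with ⟨a,b⟩|⟨a,b⟩ <;> omega
  refine ⟨?_, ?_, ?_, ?_⟩
  · intro j hj
    rcases Nat.eq_zero_or_pos j with h | h
    · subst h; rw [insF_0]; omega
    by_cases h2 : j ≤ p + 1
    · rw [insF_mid j h h2]; have := hg.lt (j-1) (by omega); omega
    by_cases h3 : j = p + 2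
    · subst h3; rw [insF_p2]; omega
    by_cases h4 : j = p + 3
    · subst h4; rw [insF_p3]; omega
    · rw [insF_tail j (by omega) hj]; have := hg.lt (j-3) (by omega); omega
  · -- injectivity: compare "kinds"
    have key : ∀ j, j < n → (j = 0 ∧ insF p g n j = 2) ∨
        (1 ≤ j ∧ j ≤ p + 1 ∧ insF p g n j = g (j-1) + 3 ∧ j - 1 ≤ p) ∨
        (j = p + 2 ∧ insF p g n j = g p) ∨ (j = p + 3 ∧ insF p g n j = g (p+1)) ∨
        (p + 4 ≤ j ∧ insF p g n j = g (j-3) + 3 ∧ p + 1 ≤ j - 3) := by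
      intro j hj
      rcases Nat.eq_zero_or_pos j with h | h
      · exact Or.inl ⟨h, by subst h; rfl⟩
      by_cases h2 : j ≤ p + 1
      · exact Or.inr (Or.inl ⟨h, h2, insF_mid j h h2, by omega⟩)
      by_cases h3 : j = p + 2
      · exact Or.inr (Or.inr (Or.inl ⟨h3, by subst h3; exact insF_p2⟩))
      by_cases h4 : j = p + 3
      · exact Or.inr (Or.inr (Or.inr (Or.inl ⟨h4, by subst h4; exact insF_p3⟩)))
      · exact Or.inr (Or.inr (Or.inr (Or.inr ⟨by omega, insF_tail j (by omega) hj, by omega⟩)))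
    intro i hi j hj hij
    have h2' : g 0 = 2 := hg0
    have ki := key i hi; have kj := key j hj
    -- values of g at indices < n-3 that matter
    have ginj : ∀ a, a < n - 3 → ∀ b, b < n - 3 → g a = g b → a = b := hg.inj
    rcases ki with ⟨e1, v1⟩ | ⟨e1, e1', v1, e1''⟩ | ⟨e1, v1⟩ | ⟨e1, v1⟩ | ⟨e1, v1, e1'⟩ <;>
      rcases kj with ⟨e2, v2⟩ | ⟨e2, e2', v2, e2''⟩ | ⟨e2, v2⟩ | ⟨e2, v2⟩ | ⟨e2, v2, e2'⟩ <;>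
      rw [v1, v2] at hij
    all_goals try omega
    · have := ginj (i-1) (by omega) (j-1) (by omega) (by omega); omega
    · have := ginj (i-1) (by omega) (j-3) (by omega) (by omega); omega
    · have := ginj (i-3) (by omega) (j-1) (by omega) (by omega); omega
    · have := ginj (i-3) (by omega) (j-3) (by omega) (by omega); omega
  · intro v hv
    by_cases h2 : v = 2
    · exact ⟨0, by omega, by rw [insF_0, h2]⟩
    by_cases h01 : v ≤ 1
    · rcases pair with ⟨a, b⟩ | ⟨a, b⟩
      · rcases Nat.le_one_iff_eq_zero_or_eq_one.mp h01 with h | h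
        · exact ⟨p+2, by omega, by rw [insF_p2]; omega⟩
        · exact ⟨p+3, by omega, by rw [insF_p3]; omega⟩
      · rcases Nat.le_one_iff_eq_zero_or_eq_one.mp h01 with h | h
        · exact ⟨p+3, by omega, by rw [insF_p3]; omega⟩
        · exact ⟨p+2, by omega, by rw [insF_p2]; omega⟩
    · obtain ⟨i, hi, hiv⟩ := hg.surj (v - 3) (by omega)
      by_cases hip : i ≤ p
      · exact ⟨i + 1, by omega, by rw [insF_mid (i+1) (by omega) (by omega)]; simp; omega⟩
      · refine ⟨i + 3, by omega, ?_⟩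
        rw [insF_tail (i+3) (by omega) (by omega)]
        simp; omega
  · intro j hj
    rcases Nat.eq_zero_or_pos j with h | h
    · subst h
      rw [insF_0, insF_mid 1 (by omega) (by omega)]
      simp [hg0]
    by_cases h2 : j + 1 ≤ p + 1
    · rw [insF_mid j h (by omega), insF_mid (j+1) (by omega) h2]
      have := hg.bnd (j-1) (by omega)
      have e : j + 1 - 1 = (j-1) + 1 := by omega
      rw [e]; omega
    by_cases h3 : j = p + 1
    · subst h3; rw [insF_mid (p+1) (by omega) (by omega), insF_p2]
      simp; omega
    by_cases h4 : j = p + 2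
    · subst h4
      have e : p + 2 + 1 = p + 3 := rfl
      rw [insF_p2, e, insF_p3]; omega
    by_cases h5 : j = p + 3
    · subst h5
      have e : p + 3 + 1 = p + 4 := rfl
      rw [insF_p3, e, insF_tail (p+4) le_rfl (by omega)]
      simp; omega
    · rw [insF_tail j (by omega) (by omega), insF_tail (j+1) (by omega) (by omega)]
      have := hg.bnd (j-3) (by omega)
      have e : j + 1 - 3 = (j-3) + 1 := by omega
      rw [e]; omega


section Forcing
variable {n : ℕ} {f : ℕ → ℕ}

/-- any non-endpoint value sits at an interior position with two constrained neighbours -/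
lemma interior (hs : Spec n f) (v : ℕ) (hv : v < n) (hv0 : f 0 ≠ v) (hvn : f (n-1) ≠ v) :
    ∃ q, 1 ≤ q ∧ q + 2 ≤ n ∧ f q = v ∧
      f (q-1) ≤ v + 3 ∧ v ≤ f (q-1) + 3 ∧ f (q+1) ≤ v + 3 ∧ v ≤ f (q+1) + 3 ∧
      f (q-1) ≠ v ∧ f (q+1) ≠ v ∧ f (q-1) ≠ f (q+1) := by
  obtain ⟨q, hq, hfq⟩ := hs.surj v hv
  have hq0 : q ≠ 0 := by rintro rfl; exact hv0 hfq
  have hqn : q ≠ n - 1 := by rintro rfl; exact hvn hfq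
  have h1 : 1 ≤ q := by omega
  have h2 : q + 2 ≤ n := by omega
  have b1 := hs.bnd (q-1) (by omega)
  have e : q - 1 + 1 = q := by omega
  rw [e] at b1
  have b2 := hs.bnd q (by omega)
  refine ⟨q, h1, h2, hfq, by omega, by omega, by omega, by omega, ?_, ?_, ?_⟩
  · intro h; have := hs.inj (q-1) (by omega) q (by omega) (by rw [h, hfq]); omega
  · intro h; have := hs.inj (q+1) (by omega) q (by omega) (by rw [h, hfq]); omega
  · intro h; have := hs.inj (q-1) (by omega) (q+1) (by omega) h; omega

variable (hs : Spec n f) (h0 : f 0 = 2) (he : f (n-1) = n-1) (hn : 6 ≤ n)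
include hs h0 he hn

lemma f1_cases : f 1 = 0 ∨ f 1 = 1 ∨ f 1 = 3 ∨ f 1 = 4 ∨ f 1 = 5 := by
  have b : f 0 ≤ f 1 + 3 ∧ f 1 ≤ f 0 + 3 := hs.bnd 0 (by omega)
  have h2 : f 1 ≠ 2 := by
    intro h; have := hs.inj 1 (by omega) 0 (by omega) (by rw [h, h0]); omega
  rw [h0] at b; omega

lemma S1 (h1 : f 1 = 1) : f 2 = 0 ∧ f 3 = 3 := by
  obtain ⟨q, hq1, hq2, hfq, b1, b2, b3, b4, ne1, ne2, ne3⟩ :=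
    interior hs 0 (by omega) (by omega) (by omega)
  have hq3 : f (q+1) = 3 := by
    rcases (by omega : f (q+1) = 1 ∨ f (q+1) = 2 ∨ f (q+1) = 3) with h|h|h
    · have := hs.inj (q+1) (by omega) 1 (by omega) (by rw [h, h1]); omega
    · have := hs.inj (q+1) (by omega) 0 (by omega) (by rw [h, h0]); omega
    · exact h
  have hqm : f (q-1) = 1 := by
    rcases (by omega : f (q-1) = 1 ∨ f (q-1) = 2 ∨ f (q-1) = 3) with h|h|h
    · exact h
    · exfalso
      have e2 := hs.inj (q-1) (by omega) 0 (by omega) (by rw [h, h0])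
      have hq' : q = 1 := by omega
      subst hq'
      omega
    · omega
  have hqe : q - 1 = 1 := hs.inj (q-1) (by omega) 1 (by omega) (by rw [hqm, h1])
  have hq : q = 2 := by omega
  subst hq
  exact ⟨hfq, hq3⟩

lemma S2 (hnj : ¬(f 1 = 0 ∧ f 2 = 3 ∧ f 3 = 1 ∧ f 4 = 4)) (h1 : f 1 = 0) : f 2 = 1 := by
  obtain ⟨q, hq1, hq2, hfq, b1, b2, b3, b4, ne1, ne2, ne3⟩ :=
    interior hs 1 (by omega) (by omega) (by omega)
  by_cases hq : q = 2
  · subst hq; exact hfq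
  exfalso
  -- f 2 = 3 is forced
  have hb1 : f 1 ≤ f 2 + 3 ∧ f 2 ≤ f 1 + 3 := hs.bnd 1 (by omega)
  have hf2 : f 2 = 3 := by
    have h20 : f 2 ≠ 0 := by
      intro h; have := hs.inj 2 (by omega) 1 (by omega) (by rw [h, h1]); omega
    have h21 : f 2 ≠ 1 := by
      intro h; have := hs.inj 2 (by omega) q (by omega) (by rw [h, hfq]); omega
    have h22 : f 2 ≠ 2 := by
      intro h; have := hs.inj 2 (by omega) 0 (by omega) (by rw [h, h0]); omega
    omega
  -- neighbours of 1 are 3 and 4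
  have hqm : f (q-1) = 3 ∨ f (q-1) = 4 := by
    have e0 : f (q-1) ≠ 0 := by
      intro h; have := hs.inj (q-1) (by omega) 1 (by omega) (by rw [h, h1]); omega
    have e2 : f (q-1) ≠ 2 := by
      intro h; have := hs.inj (q-1) (by omega) 0 (by omega) (by rw [h, h0])
      have : q = 1 := by omega
      subst this; rw [h1] at hfq; omega
    omega
  have hqp : f (q+1) = 3 ∨ f (q+1) = 4 := by
    have e0 : f (q+1) ≠ 0 := by
      intro h; have := hs.inj (q+1) (by omega) 1 (by omega) (by rw [h, h1]); omega
    have e2 : f (q+1) ≠ 2 := by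
      intro h; have := hs.inj (q+1) (by omega) 0 (by omega) (by rw [h, h0]); omega
    omega
  -- the 3-neighbour forces q = 3 and then joker
  have hq3 : q = 3 := by
    rcases hqm with h|h
    · have := hs.inj (q-1) (by omega) 2 (by omega) (by rw [h, hf2]); omega
    · rcases hqp with h'|h'
      · have := hs.inj (q+1) (by omega) 2 (by omega) (by rw [h', hf2])
        have : q = 1 := by omega
        subst this; rw [h1] at hfq; omega
      · omega
  subst hq3
  norm_num at hqp hfq
  have hf4 : f 4 = 4 := by
    rcases hqp with h|h
    · exfalso
      have := hs.inj 4 (by omega) 2 (by omega) (by rw [h, hf2]); omega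
    · exact h
  exact hnj ⟨h1, hf2, hfq, hf4⟩

lemma S3 (h1 : f 1 = 3) : f 2 = 0 ∧ f 3 = 1 ∧ f 4 = 4 := by
  obtain ⟨q, hq1, hq2, hfq, b1, b2, b3, b4, ne1, ne2, ne3⟩ :=
    interior hs 0 (by omega) (by omega) (by omega)
  have hqp : f (q+1) = 1 := by
    have a2 : f (q+1) ≠ 2 := by
      intro h; have := hs.inj (q+1) (by omega) 0 (by omega) (by rw [h, h0]); omega
    have a3 : f (q+1) ≠ 3 := by
      intro h; have := hs.inj (q+1) (by omega) 1 (by omega) (by rw [h, h1]); omega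
    omega
  have hq : q = 2 := by
    have a1 : f (q-1) ≠ 1 := by omega
    have a2 : f (q-1) ≠ 2 := by
      intro h
      have := hs.inj (q-1) (by omega) 0 (by omega) (by rw [h, h0])
      have hq' : q = 1 := by omega
      subst hq'; omega
    have a3 : f (q-1) = 3 := by omega
    have := hs.inj (q-1) (by omega) 1 (by omega) (by rw [a3, h1])
    omega
  subst hq
  norm_num at hqp
  have hb3 : f 3 ≤ f 4 + 3 ∧ f 4 ≤ f 3 + 3 := hs.bnd 3 (by omega)
  have hf4 : f 4 = 4 := by
    have a0 : f 4 ≠ 0 := by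
      intro h; have := hs.inj 4 (by omega) 2 (by omega) (by rw [h, hfq]); omega
    have a1 : f 4 ≠ 1 := by
      intro h; have := hs.inj 4 (by omega) 3 (by omega) (by rw [h, hqp]); omega
    have a2 : f 4 ≠ 2 := by
      intro h; have := hs.inj 4 (by omega) 0 (by omega) (by rw [h, h0]); omega
    have a3 : f 4 ≠ 3 := by
      intro h; have := hs.inj 4 (by omega) 1 (by omega) (by rw [h, h1]); omega
    omega
  exact ⟨hfq, hqp, hf4⟩

lemma S4 (h1 : f 1 = 4) : f 2 = 1 ∧ f 3 = 0 ∧ f 4 = 3 := by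
  obtain ⟨q, hq1, hq2, hfq, qb1, qb2, qb3, qb4, qne1, qne2, qne3⟩ :=
    interior hs 0 (by omega) (by omega) (by omega)
  obtain ⟨r, hr1, hr2, hfr, rb1, rb2, rb3, rb4, rne1, rne2, rne3⟩ :=
    interior hs 1 (by omega) (by omega) (by omega)
  have hq0 : (f (q-1) = 1 ∧ f (q+1) = 3) ∨ (f (q-1) = 3 ∧ f (q+1) = 1) := by
    have a1 : f (q-1) ≠ 2 := by
      intro h
      have := hs.inj (q-1) (by omega) 0 (by omega) (by rw [h, h0])
      have hq' : q = 1 := by omega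
      subst hq'; omega
    have a2 : f (q+1) ≠ 2 := by
      intro h; have := hs.inj (q+1) (by omega) 0 (by omega) (by rw [h, h0]); omega
    omega
  by_cases hr : r = 2
  · subst hr
    norm_num at rb3 rb4 rne2 rne3
    have hf3 : f 3 = 0 ∨ f 3 = 3 := by
      have a0 : f 3 ≠ 2 := by
        intro h; have := hs.inj 3 (by omega) 0 (by omega) (by rw [h, h0]); omega
      have a1 : f 3 ≠ 4 := by
        intro h; have := hs.inj 3 (by omega) 1 (by omega) (by rw [h, h1]); omega
      omega
    rcases hf3 with h3 | h3
    · have hq3 : q = 3 := hs.inj q (by omega) 3 (by omega) (by rw [hfq, h3])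
      subst hq3
      norm_num at hq0
      rcases hq0 with ⟨a, b⟩ | ⟨a, b⟩
      · exact ⟨hfr, h3, b⟩
      · omega
    · exfalso
      rcases hq0 with ⟨a, b⟩ | ⟨a, b⟩
      · have := hs.inj (q-1) (by omega) 2 (by omega) (by rw [a, hfr])
        have hq' : q = 3 := by omega
        subst hq'; omega
      · have := hs.inj (q+1) (by omega) 2 (by omega) (by rw [b, hfr])
        have hq' : q = 1 := by omega
        subst hq'; omega
  · exfalso
    have hr0 : (f (r-1) = 0 ∧ f (r+1) = 3) ∨ (f (r-1) = 3 ∧ f (r+1) = 0) := by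
      have a1 : f (r-1) ≠ 2 := by
        intro h
        have := hs.inj (r-1) (by omega) 0 (by omega) (by rw [h, h0])
        have hr' : r = 1 := by omega
        subst hr'; omega
      have a2 : f (r+1) ≠ 2 := by
        intro h; have := hs.inj (r+1) (by omega) 0 (by omega) (by rw [h, h0]); omega
      have a3 : f (r-1) ≠ 4 := by
        intro h
        have := hs.inj (r-1) (by omega) 1 (by omega) (by rw [h, h1])
        omega
      have a4 : f (r+1) ≠ 4 := by
        intro h; have := hs.inj (r+1) (by omega) 1 (by omega) (by rw [h, h1]); omega
      omega
    rcases hr0 with ⟨a1, a2⟩ | ⟨a1, a2⟩ <;> rcases hq0 with ⟨c1, c2⟩ | ⟨c1, c2⟩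
    · have e1 := hs.inj (r-1) (by omega) q (by omega) (by rw [a1, hfq])
      have e2 := hs.inj (q-1) (by omega) r (by omega) (by rw [c1, hfr])
      omega
    · have e1 := hs.inj (r-1) (by omega) q (by omega) (by rw [a1, hfq])
      have e2 := hs.inj (q+1) (by omega) r (by omega) (by rw [c2, hfr])
      have e3 := hs.inj (r+1) (by omega) (q-1) (by omega) (by rw [a2, c1])
      omega
    · have e1 := hs.inj (r+1) (by omega) q (by omega) (by rw [a2, hfq])
      have e2 := hs.inj (q-1) (by omega) r (by omega) (by rw [c1, hfr])
      have e3 := hs.inj (r-1) (by omega) (q+1) (by omega) (by rw [a1, c2])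
      omega
    · have e1 := hs.inj (r+1) (by omega) q (by omega) (by rw [a2, hfq])
      have e2 := hs.inj (q+1) (by omega) r (by omega) (by rw [c2, hfr])
      omega

lemma S5 (h1 : f 1 = 5) : ∃ t, 2 ≤ t ∧ t + 5 ≤ n ∧
    ((f t = 3 ∧ f (t+1) = 0 ∧ f (t+2) = 1 ∧ f (t+3) = 4) ∨
     (f t = 4 ∧ f (t+1) = 1 ∧ f (t+2) = 0 ∧ f (t+3) = 3)) := by
  obtain ⟨q, hq1, hq2, hfq, qb1, qb2, qb3, qb4, qne1, qne2, qne3⟩ :=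
    interior hs 0 (by omega) (by omega) (by omega)
  obtain ⟨r, hr1, hr2, hfr, rb1, rb2, rb3, rb4, rne1, rne2, rne3⟩ :=
    interior hs 1 (by omega) (by omega) (by omega)
  have hq0 : (f (q-1) = 1 ∧ f (q+1) = 3) ∨ (f (q-1) = 3 ∧ f (q+1) = 1) := by
    have a1 : f (q-1) ≠ 2 := by
      intro h
      have := hs.inj (q-1) (by omega) 0 (by omega) (by rw [h, h0])
      have hq' : q = 1 := by omega
      subst hq'; omega
    have a2 : f (q+1) ≠ 2 := by
      intro h; have := hs.inj (q+1) (by omega) 0 (by omega) (by rw [h, h0]); omega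
    omega
  rcases hq0 with ⟨a1, a2⟩ | ⟨a1, a2⟩
  · -- descending block 4,1,0,3 at positions r-1, r, q, q+1  with r = q-1
    have e1 : q - 1 = r := hs.inj (q-1) (by omega) r (by omega) (by rw [a1, hfr])
    have hr2' : r ≠ 1 := by
      intro h; rw [h] at hfr; omega
    have hf4 : f (r-1) = 4 := by
      have a3 : f (r-1) ≠ 0 := by
        intro h
        have := hs.inj (r-1) (by omega) q (by omega) (by rw [h, hfq]); omega
      have a4 : f (r-1) ≠ 2 := by
        intro h
        have := hs.inj (r-1) (by omega) 0 (by omega) (by rw [h, h0])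
        omega
      have a5 : f (r-1) ≠ 3 := by
        intro h
        have := hs.inj (r-1) (by omega) (q+1) (by omega) (by rw [h, a2]); omega
      omega
    have hrne2 : r ≠ 2 := by
      intro h; rw [h] at hf4; norm_num at hf4; omega
    have hqn : q + 1 ≠ n - 1 := by
      intro h; rw [h] at a2; omega
    refine ⟨r - 1, by omega, by omega, Or.inr ⟨hf4, ?_, ?_, ?_⟩⟩
    · rw [(by omega : r - 1 + 1 = r)]; exact hfr
    · rw [(by omega : r - 1 + 2 = q)]; exact hfq
    · rw [(by omega : r - 1 + 3 = q + 1)]; exact a2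
  · -- ascending block 3,0,1,4 at positions q-1, q, r, r+1 with r = q+1
    have e1 : q + 1 = r := hs.inj (q+1) (by omega) r (by omega) (by rw [a2, hfr])
    have hf4 : f (r+1) = 4 := by
      have a3 : f (r+1) ≠ 0 := by
        intro h
        have := hs.inj (r+1) (by omega) q (by omega) (by rw [h, hfq]); omega
      have a4 : f (r+1) ≠ 2 := by
        intro h
        have := hs.inj (r+1) (by omega) 0 (by omega) (by rw [h, h0]); omega
      have a5 : f (r+1) ≠ 3 := by
        intro h
        have := hs.inj (r+1) (by omega) (q-1) (by omega) (by rw [h, a1]); omega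
      omega
    have hq1' : q ≠ 1 := by
      intro h; rw [h] at hfq; omega
    have hq2' : q ≠ 2 := by
      intro h; rw [h] at a1; norm_num at a1; omega
    have hrn : r + 1 ≠ n - 1 := by
      intro h; rw [h] at hf4; omega
    refine ⟨q - 1, by omega, by omega, Or.inl ⟨?_, ?_, ?_, ?_⟩⟩
    · rw [(by omega : q - 1 = q - 1)]; exact a1
    · rw [(by omega : q - 1 + 1 = q)]; exact hfq
    · rw [(by omega : q - 1 + 2 = r)]; exact hfr
    · rw [(by omega : q - 1 + 3 = r + 1)]; exact hf4

end Forcing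

section ADJ
variable {m : ℕ} {g : ℕ → ℕ}

/-- In an H-type sequence (starts at 2, ends at m-1, not joker), the values 0 and 1
are adjacent, away from the ends. -/
lemma ADJ (hs : Spec m g) (h0 : g 0 = 2) (he : g (m-1) = m-1) (hm : 3 ≤ m)
    (hnj : ¬(g 1 = 0 ∧ g 2 = 3 ∧ g 3 = 1 ∧ g 4 = 4))
    {q0 q1 : ℕ} (hq0m : q0 < m) (hq1m : q1 < m) (e0 : g q0 = 0) (e1 : g q1 = 1) :
    1 ≤ q0 ∧ 1 ≤ q1 ∧ q0 + 2 ≤ m ∧ q1 + 2 ≤ m ∧ (q1 = q0 + 1 ∨ q0 = q1 + 1) := by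
  have hm4 : 4 ≤ m := by
    rcases Nat.lt_or_ge m 4 with h | h
    · exfalso
      have hm3 : m = 3 := by omega
      subst hm3
      norm_num at he
      have := hs.inj 2 (by omega) 0 (by omega) (by rw [he, h0])
      omega
    · exact h
  have hb0 : 1 ≤ q0 := by
    rcases Nat.eq_zero_or_pos q0 with h | h
    · rw [h] at e0; omega
    · exact h
  have hb1 : 1 ≤ q1 := by
    rcases Nat.eq_zero_or_pos q1 with h | h
    · rw [h] at e1; omega
    · exact h
  have hc0 : q0 + 2 ≤ m := by
    have : q0 ≠ m - 1 := by intro h; rw [h] at e0; omega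
    omega
  have hc1 : q1 + 2 ≤ m := by
    have : q1 ≠ m - 1 := by intro h; rw [h] at e1; omega
    omega
  refine ⟨hb0, hb1, hc0, hc1, ?_⟩
  obtain ⟨q, hq1', hq2', hfq, qb1, qb2, qb3, qb4, qne1, qne2, qne3⟩ :=
    interior hs 0 (by omega) (by omega) (by omega)
  have hqq : q = q0 := hs.inj q (by omega) q0 (by omega) (by rw [hfq, e0])
  subst hqq
  by_cases had1 : g (q-1) = 1
  · have : q - 1 = q1 := hs.inj (q-1) (by omega) q1 (by omega) (by rw [had1, e1])
    omega
  by_cases had2 : g (q+1) = 1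
  · have : q + 1 = q1 := hs.inj (q+1) (by omega) q1 (by omega) (by rw [had2, e1])
    omega
  exfalso
  -- then neighbours of 0 are {2,3}, forcing q = 1 and g 2 = 3
  have hgm2 : g (q+1) ≠ 2 := by
    intro h; have := hs.inj (q+1) (by omega) 0 (by omega) (by rw [h, h0]); omega
  have hq23 : g (q-1) = 2 ∧ g (q+1) = 3 := by
    have h3 : g (q+1) = 3 := by omega
    have h2 : g (q-1) = 2 := by omega
    exact ⟨h2, h3⟩
  have hqe : q - 1 = 0 := hs.inj (q-1) (by omega) 0 (by omega) (by rw [hq23.1, h0])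
  have hqv : q = 1 := by omega
  subst hqv
  norm_num at hq23 hfq
  -- g 1 = 0, g 2 = 3; now analyse value 1
  obtain ⟨r, hr1', hr2', hfr, rb1, rb2, rb3, rb4, rne1, rne2, rne3⟩ :=
    interior hs 1 (by omega) (by omega) (by omega)
  have hrq : r = q1 := hs.inj r (by omega) q1 (by omega) (by rw [hfr, e1])
  subst hrq
  -- neighbours of 1 in {0,2,3,4}; 0,2 impossible; g(r+1) = 4 forced
  have hp4 : g (r+1) = 4 := by
    have a0 : g (r+1) ≠ 0 := by
      intro h
      have := hs.inj (r+1) (by omega) 1 (by omega) (by rw [h, hfq])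
      have : r = 0 := by omega
      subst this; omega
    have a2 : g (r+1) ≠ 2 := by
      intro h; have := hs.inj (r+1) (by omega) 0 (by omega) (by rw [h, h0]); omega
    have a3 : g (r+1) ≠ 3 := by
      intro h
      have := hs.inj (r+1) (by omega) 2 (by omega) (by rw [h, hq23.2])
      have : r = 1 := by omega
      subst this; omega
    omega
  by_cases hr3 : r = 3
  · subst hr3
    norm_num at hp4
    exact hnj ⟨hfq, hq23.2, hfr, hp4⟩
  · have am0 : g (r-1) ≠ 0 := by
      intro h
      have := hs.inj (r-1) (by omega) 1 (by omega) (by rw [h, hfq])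
      have : r = 2 := by omega
      subst this
      omega
    have am2 : g (r-1) ≠ 2 := by
      intro h
      have := hs.inj (r-1) (by omega) 0 (by omega) (by rw [h, h0])
      have : r = 1 := by omega
      subst this; omega
    have am3 : g (r-1) ≠ 3 := by
      intro h
      have := hs.inj (r-1) (by omega) 2 (by omega) (by rw [h, hq23.2])
      omega
    omega

end ADJ

/-! ### subtype abbreviations and conversions -/

abbrev FSub (m : ℕ) := {π : Equiv.Perm (Fin m) // IsKBounded 3 m π ∧ IsAnchored m π}
abbrev GSub (m : ℕ) := {π : Equiv.Perm (Fin m) // IsKBounded 3 m π ∧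
    (∀ i : Fin m, (i : ℕ) = 0 → ((π i : ℕ) = 0 ∨ (π i : ℕ) = 1)) ∧
    (∀ i : Fin m, (i : ℕ) = m - 1 → π i = i)}
abbrev HSub (m : ℕ) := {π : Equiv.Perm (Fin m) // IsKBounded 3 m π ∧
    (∀ i : Fin m, (i : ℕ) = 0 → (π i : ℕ) = 2) ∧
    (∀ i : Fin m, (i : ℕ) = m - 1 → π i = i) ∧ ¬ StartsWithJoker m π}

example (m : ℕ) : numF m = Nat.card (FSub m) := rfl
example (m : ℕ) : numG m = Nat.card (GSub m) := rfl
example (m : ℕ) : numH m = Nat.card (HSub m) := rfl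

lemma F_facts {m : ℕ} (hm : 1 ≤ m) (σ : FSub m) :
    Spec m (pf m σ.1) ∧ pf m σ.1 0 = 0 ∧ pf m σ.1 (m-1) = m-1 := by
  obtain ⟨π, hb, ha⟩ := σ
  refine ⟨pf_spec m π hb, ?_, ?_⟩
  · rw [pf_apply m π 0 (by omega)]
    exact congrArg Fin.val ((ha ⟨0, by omega⟩).1 rfl)
  · rw [pf_apply m π (m-1) (by omega)]
    exact congrArg Fin.val ((ha ⟨m-1, by omega⟩).2 rfl)

lemma G_facts {m : ℕ} (hm : 1 ≤ m) (σ : GSub m) :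
    Spec m (pf m σ.1) ∧ (pf m σ.1 0 = 0 ∨ pf m σ.1 0 = 1) ∧ pf m σ.1 (m-1) = m-1 := by
  obtain ⟨π, hb, hg, ha⟩ := σ
  refine ⟨pf_spec m π hb, ?_, ?_⟩
  · rw [pf_apply m π 0 (by omega)]
    exact hg ⟨0, by omega⟩ rfl
  · rw [pf_apply m π (m-1) (by omega)]
    exact congrArg Fin.val (ha ⟨m-1, by omega⟩ rfl)

lemma H_facts {m : ℕ} (hm : 3 ≤ m) (σ : HSub m) :
    Spec m (pf m σ.1) ∧ pf m σ.1 0 = 2 ∧ pf m σ.1 (m-1) = m-1 ∧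
    ¬(pf m σ.1 1 = 0 ∧ pf m σ.1 2 = 3 ∧ pf m σ.1 3 = 1 ∧ pf m σ.1 4 = 4) := by
  obtain ⟨π, hb, hg, ha, hnj⟩ := σ
  have h0 : pf m π 0 = 2 := by
    rw [pf_apply m π 0 (by omega)]; exact hg ⟨0, by omega⟩ rfl
  have he : pf m π (m-1) = m-1 := by
    rw [pf_apply m π (m-1) (by omega)]
    exact congrArg Fin.val (ha ⟨m-1, by omega⟩ rfl)
  refine ⟨pf_spec m π hb, h0, he, ?_⟩
  rintro ⟨j1, j2, j3, j4⟩
  simp only [Subtype.coe_mk] at j1 j2 j3 j4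
  by_cases h5 : 5 ≤ m
  · apply hnj
    refine ⟨h5, ?_, ?_, ?_, ?_, ?_⟩
    · rw [← pf_apply m π 0 (by omega)]; exact h0
    · rw [← pf_apply m π 1 (by omega)]; exact j1
    · rw [← pf_apply m π 2 (by omega)]; exact j2
    · rw [← pf_apply m π 3 (by omega)]; exact j3
    · rw [← pf_apply m π 4 (by omega)]; exact j4
  · -- m = 3 or 4 : contradiction with endpoint
    by_cases h4 : m = 4
    · subst h4; norm_num at he; omega
    · have h3 : m = 3 := by omega
      subst h3; norm_num at he; omega

lemma mk_F_mem (m : ℕ) (hm : 1 ≤ m) (f h1 h2) (hb : Bnd m f) (hf0 : f 0 = 0)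
    (hfe : f (m-1) = m-1) : IsKBounded 3 m (mkPerm m f h1 h2) ∧ IsAnchored m (mkPerm m f h1 h2) := by
  refine ⟨mkPerm_bounded m f h1 h2 hb, ?_⟩
  intro i
  constructor <;> intro h <;> apply Fin.ext <;> rw [mkPerm_apply] <;> rw [h]
  · exact hf0
  · exact hfe

lemma mk_G_mem (m : ℕ) (hm : 1 ≤ m) (f h1 h2) (hb : Bnd m f) (hf0 : f 0 = 0 ∨ f 0 = 1)
    (hfe : f (m-1) = m-1) : IsKBounded 3 m (mkPerm m f h1 h2) ∧
      (∀ i : Fin m, (i : ℕ) = 0 → (((mkPerm m f h1 h2) i : ℕ) = 0 ∨ ((mkPerm m f h1 h2) i : ℕ) = 1)) ∧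
      (∀ i : Fin m, (i : ℕ) = m - 1 → (mkPerm m f h1 h2) i = i) := by
  refine ⟨mkPerm_bounded m f h1 h2 hb, ?_, ?_⟩
  · intro i h; rw [mkPerm_apply, h]; exact hf0
  · intro i h; apply Fin.ext; rw [mkPerm_apply, h]; exact hfe

lemma mk_H_mem (m : ℕ) (hm : 1 ≤ m) (f h1 h2) (hb : Bnd m f) (hf0 : f 0 = 2)
    (hfe : f (m-1) = m-1) (hnj : f 1 ≠ 0 ∨ f 2 ≠ 3) :
    IsKBounded 3 m (mkPerm m f h1 h2) ∧
      (∀ i : Fin m, (i : ℕ) = 0 → ((mkPerm m f h1 h2) i : ℕ) = 2) ∧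
      (∀ i : Fin m, (i : ℕ) = m - 1 → (mkPerm m f h1 h2) i = i) ∧
      ¬ StartsWithJoker m (mkPerm m f h1 h2) := by
  refine ⟨mkPerm_bounded m f h1 h2 hb, ?_, ?_, ?_⟩
  · intro i h; rw [mkPerm_apply, h]; exact hf0
  · intro i h; apply Fin.ext; rw [mkPerm_apply, h]; exact hfe
  · rintro ⟨h5, j0, j1, j2, j3, j4⟩
    rw [mkPerm_apply] at j1 j2
    simp only at j1 j2
    rcases hnj with h | h
    · exact h j1
    · exact h j2

lemma pf_ext {m : ℕ} (σ τ : Equiv.Perm (Fin m)) (h : ∀ i, i < m → pf m σ i = pf m τ i) :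
    σ = τ := by
  apply Equiv.ext
  intro i
  apply Fin.ext
  have := h i i.2
  rwa [pf_apply m σ i i.2, pf_apply m τ i i.2] at this

/-- extract the tail of `f` after a prefix of length `k` that contains exactly values `< k` -/
lemma chop {n : ℕ} {f : ℕ → ℕ} (k : ℕ) (hk : 1 ≤ k) (hkn : k < n) (hs : Spec n f)
    (hlow : ∀ j, j < n → f j < k → j < k) (hhigh : ∀ j, j < k → f j < k) :
    Spec (n-k) (fun i => if i < n - k then f (i+k) - k else i) := by
  have hge : ∀ j, k ≤ j → j < n → k ≤ f j := by
    intro j hj1 hj2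
    by_contra h
    have := hlow j hj2 (by omega)
    omega
  refine ⟨?_, ?_, ?_, ?_⟩
  · intro i hi
    rw [if_pos hi]
    have := hs.lt (i+k) (by omega)
    have := hge (i+k) (by omega) (by omega)
    omega
  · intro i hi j hj hij
    by_cases h1 : i < n - k <;> by_cases h2 : j < n - k
    · rw [if_pos h1, if_pos h2] at hij
      have gi := hge (i+k) (by omega) (by omega)
      have gj := hge (j+k) (by omega) (by omega)
      have := hs.inj (i+k) (by omega) (j+k) (by omega) (by omega)
      omega
    · omega
    · omega
    · omega
  · intro v hv
    obtain ⟨j, hj, hjv⟩ := hs.surj (v+k) (by omega)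
    have hjk : k ≤ j := by
      by_contra h
      have := hhigh j (by omega)
      omega
    refine ⟨j - k, by omega, ?_⟩
    rw [if_pos (by omega)]
    rw [(by omega : j - k + k = j)]
    omega
  · intro i hi
    simp only
    rw [if_pos (by omega), if_pos (by omega)]
    have hb := hs.bnd (i+k) (by omega)
    have g1 := hge (i+k) (by omega) (by omega)
    have g2 := hge (i+k+1) (by omega) (by omega)
    rw [(by omega : i + 1 + k = i + k + 1)]
    omega

/-! ### forward maps -/

noncomputable def mkH (n : ℕ) (f : ℕ → ℕ) (hs : Spec n f) (hm : 1 ≤ n) (h0 : f 0 = 2)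
    (he : f (n-1) = n-1) (hj : f 1 ≠ 0 ∨ f 2 ≠ 3) : HSub n :=
  ⟨mkPerm n f hs.lt hs.inj, mk_H_mem n hm f hs.lt hs.inj hs.bnd h0 he hj⟩

lemma mkH_pf (n f hs hm h0 he hj) (j : ℕ) (hj' : j < n) :
    pf n (mkH n f hs hm h0 he hj).1 j = f j := pf_mkPerm n f hs.lt hs.inj j hj'

def preA : ℕ → ℕ := fun j => if j = 0 then 2 else if j = 1 then 1 else 0
def preB : ℕ → ℕ := fun j => if j = 0 then 2 else if j = 1 then 0 else 1
def preD : ℕ → ℕ := fun j => if j = 0 then 2 else if j = 1 then 3 else if j = 2 then 0 else 1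
def preC : ℕ → ℕ := fun j => if j = 0 then 2 else if j = 1 then 4 else if j = 2 then 1
  else if j = 3 then 0 else 3

section FwdMaps
variable (n : ℕ) (hn : 6 ≤ n)
include hn

lemma ΦAspec (σ : FSub (n-3)) : Spec n (glueF 3 preA (pf (n-3) σ.1) n) := by
  have facts := F_facts (m := n-3) (by omega) σ
  set g := pf (n-3) σ.1 with hg
  exact by
    refine glueF_spec 3 n preA g (by omega) (by omega) (by decide) (by decide) (by decide)
      (by intro j hj; rcases (by omega : j = 0 ∨ j = 1) with rfl | rfl <;> decide) ?_ facts.1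
    have := facts.2.1
    simp only [preA]
    norm_num
    omega
  
noncomputable def ΦA (σ : FSub (n-3)) : HSub n := by
  have facts := F_facts (m := n-3) (by omega) σ
  set g := pf (n-3) σ.1 with hg
  have hspec := ΦAspec n hn σ
  refine mkH n (glueF 3 preA g n) hspec (by omega) ?_ ?_ ?_
  · rw [glueF_pre _ _ _ _ 0 (by omega)]; rfl
  · rw [glueF_tail _ _ _ _ (n-1) (by omega) (by omega)]
    have he := facts.2.2
    rw [(by omega : n - 1 - 3 = n - 3 - 1), he]
    omega
  · left; rw [glueF_pre _ _ _ _ 1 (by omega)]; simp [preA]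

lemma ΦBspec (σ : GSub (n-3)) : Spec n (glueF 3 preB (pf (n-3) σ.1) n) := by
  have facts := G_facts (m := n-3) (by omega) σ
  set g := pf (n-3) σ.1 with hg
  exact by
    refine glueF_spec 3 n preB g (by omega) (by omega) (by decide) (by decide) (by decide)
      (by intro j hj; rcases (by omega : j = 0 ∨ j = 1) with rfl | rfl <;> decide) ?_ facts.1
    have := facts.2.1
    simp only [preB]
    norm_num
    omega
  
noncomputable def ΦB (σ : GSub (n-3)) : HSub n := by
  have facts := G_facts (m := n-3) (by omega) σ
  set g := pf (n-3) σ.1 with hg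
  have hspec := ΦBspec n hn σ
  refine mkH n (glueF 3 preB g n) hspec (by omega) ?_ ?_ ?_
  · rw [glueF_pre _ _ _ _ 0 (by omega)]; rfl
  · rw [glueF_tail _ _ _ _ (n-1) (by omega) (by omega)]
    have he := facts.2.2
    rw [(by omega : n - 1 - 3 = n - 3 - 1), he]
    omega
  · right; rw [glueF_pre _ _ _ _ 2 (by omega)]; simp [preB]

lemma ΦDspec (σ : FSub (n-4)) : Spec n (glueF 4 preD (pf (n-4) σ.1) n) := by
  have facts := F_facts (m := n-4) (by omega) σ
  set g := pf (n-4) σ.1 with hg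
  exact by
    refine glueF_spec 4 n preD g (by omega) (by omega) (by decide) (by decide) (by decide)
      (by intro j hj; rcases (by omega : j = 0 ∨ j = 1 ∨ j = 2) with rfl | rfl | rfl <;> decide) ?_ facts.1
    have := facts.2.1
    simp only [preD]
    norm_num
    omega
  
noncomputable def ΦD (σ : FSub (n-4)) : HSub n := by
  have facts := F_facts (m := n-4) (by omega) σ
  set g := pf (n-4) σ.1 with hg
  have hspec := ΦDspec n hn σ
  refine mkH n (glueF 4 preD g n) hspec (by omega) ?_ ?_ ?_
  · rw [glueF_pre _ _ _ _ 0 (by omega)]; rfl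
  · rw [glueF_tail _ _ _ _ (n-1) (by omega) (by omega)]
    have he := facts.2.2
    rw [(by omega : n - 1 - 4 = n - 4 - 1), he]
    omega
  · left; rw [glueF_pre _ _ _ _ 1 (by omega)]; simp [preD]

lemma ΦCspec (σ : GSub (n-5)) : Spec n (glueF 5 preC (pf (n-5) σ.1) n) := by
  have facts := G_facts (m := n-5) (by omega) σ
  set g := pf (n-5) σ.1 with hg
  exact by
    refine glueF_spec 5 n preC g (by omega) (by omega) (by decide) (by decide) (by decide)
      (by intro j hj; rcases (by omega : j = 0 ∨ j = 1 ∨ j = 2 ∨ j = 3) with rfl | rfl | rfl | rfl <;> decide) ?_ facts.1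
    have := facts.2.1
    simp only [preC]
    norm_num
    omega
  
noncomputable def ΦC (σ : GSub (n-5)) : HSub n := by
  have facts := G_facts (m := n-5) (by omega) σ
  set g := pf (n-5) σ.1 with hg
  have hspec := ΦCspec n hn σ
  refine mkH n (glueF 5 preC g n) hspec (by omega) ?_ ?_ ?_
  · rw [glueF_pre _ _ _ _ 0 (by omega)]; rfl
  · rw [glueF_tail _ _ _ _ (n-1) (by omega) (by omega)]
    have he := facts.2.2
    rw [(by omega : n - 1 - 5 = n - 5 - 1), he]
    omega
  · left; rw [glueF_pre _ _ _ _ 1 (by omega)]; simp [preC]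

noncomputable def pE (σ : HSub (n-3)) : ℕ :=
  min ((σ.1.symm ⟨0, by omega⟩ : Fin (n-3)) : ℕ) ((σ.1.symm ⟨1, by omega⟩ : Fin (n-3)) : ℕ)

lemma Efacts (σ : HSub (n-3)) :
    1 ≤ pE n hn σ ∧ pE n hn σ + 3 ≤ n - 3 ∧
    ((pf (n-3) σ.1 (pE n hn σ) = 0 ∧ pf (n-3) σ.1 (pE n hn σ + 1) = 1) ∨
     (pf (n-3) σ.1 (pE n hn σ) = 1 ∧ pf (n-3) σ.1 (pE n hn σ + 1) = 0)) := by
  have facts := H_facts (m := n-3) (by omega) σ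
  set g := pf (n-3) σ.1 with hg
  set q0 : ℕ := ((σ.1.symm ⟨0, by omega⟩ : Fin (n-3)) : ℕ) with hq0
  set q1 : ℕ := ((σ.1.symm ⟨1, by omega⟩ : Fin (n-3)) : ℕ) with hq1
  have hq0m : q0 < n - 3 := (σ.1.symm ⟨0, by omega⟩).2
  have hq1m : q1 < n - 3 := (σ.1.symm ⟨1, by omega⟩).2
  have e0 : g q0 = 0 := by
    rw [hg, pf_apply (n-3) σ.1 q0 hq0m]
    have : (⟨q0, hq0m⟩ : Fin (n-3)) = σ.1.symm ⟨0, by omega⟩ := by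
      apply Fin.ext; rfl
    rw [this, Equiv.apply_symm_apply]
  have e1 : g q1 = 1 := by
    rw [hg, pf_apply (n-3) σ.1 q1 hq1m]
    have : (⟨q1, hq1m⟩ : Fin (n-3)) = σ.1.symm ⟨1, by omega⟩ := by
      apply Fin.ext; rfl
    rw [this, Equiv.apply_symm_apply]
  obtain ⟨b0, b1, c0, c1, hadj⟩ :=
    ADJ facts.1 facts.2.1 facts.2.2.1 (by omega) facts.2.2.2 hq0m hq1m e0 e1
  have hpe : pE n hn σ = min q0 q1 := rfl
  rcases hadj with h | h
  · refine ⟨by omega, by omega, Or.inl ⟨?_, ?_⟩⟩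
    · rw [hpe, (by omega : min q0 q1 = q0)]; exact e0
    · rw [hpe, (by omega : min q0 q1 + 1 = q1)]; exact e1
  · refine ⟨by omega, by omega, Or.inr ⟨?_, ?_⟩⟩
    · rw [hpe, (by omega : min q0 q1 = q1)]; exact e1
    · rw [hpe, (by omega : min q0 q1 + 1 = q0)]; exact e0

noncomputable def ΦE (σ : HSub (n-3)) : HSub n := by
  have facts := H_facts (m := n-3) (by omega) σ
  have ef := Efacts n hn σ
  set g := pf (n-3) σ.1 with hg
  set p := pE n hn σ with hp
  have hspec : Spec n (insF p g n) :=
    insF_spec facts.1 hn ef.1 ef.2.1 ef.2.2 facts.2.1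
  refine mkH n (insF p g n) hspec (by omega) insF_0 ?_ ?_
  · rw [insF_tail (n-1) (by omega) (by omega)]
    have he := facts.2.2.1
    rw [(by omega : n - 1 - 3 = n - 3 - 1), he]
    omega
  · left
    rw [insF_mid 1 (by omega) (by omega)]
    simp only [Nat.sub_self]
    have := facts.2.1
    omega

end FwdMaps

section ValLemmas
variable (n : ℕ) (hn : 6 ≤ n)

lemma ΦA_pf (σ : FSub (n-3)) (j : ℕ) (hj : j < n) :
    pf n (ΦA n hn σ).1 j = glueF 3 preA (pf (n-3) σ.1) n j := by
  unfold ΦA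
  apply pf_mkPerm
  case h1 => exact (ΦAspec n hn σ).lt
  case h2 => exact (ΦAspec n hn σ).inj
  case hj => exact hj

lemma ΦB_pf (σ : GSub (n-3)) (j : ℕ) (hj : j < n) :
    pf n (ΦB n hn σ).1 j = glueF 3 preB (pf (n-3) σ.1) n j := by
  unfold ΦB
  apply pf_mkPerm
  case h1 => exact (ΦBspec n hn σ).lt
  case h2 => exact (ΦBspec n hn σ).inj
  case hj => exact hj

lemma ΦD_pf (σ : FSub (n-4)) (j : ℕ) (hj : j < n) :
    pf n (ΦD n hn σ).1 j = glueF 4 preD (pf (n-4) σ.1) n j := by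
  unfold ΦD
  apply pf_mkPerm
  case h1 => exact (ΦDspec n hn σ).lt
  case h2 => exact (ΦDspec n hn σ).inj
  case hj => exact hj

lemma ΦC_pf (σ : GSub (n-5)) (j : ℕ) (hj : j < n) :
    pf n (ΦC n hn σ).1 j = glueF 5 preC (pf (n-5) σ.1) n j := by
  unfold ΦC
  apply pf_mkPerm
  case h1 => exact (ΦCspec n hn σ).lt
  case h2 => exact (ΦCspec n hn σ).inj
  case hj => exact hj

lemma ΦE_pf (σ : HSub (n-3)) (j : ℕ) (hj : j < n) :
    pf n (ΦE n hn σ).1 j = insF (pE n hn σ) (pf (n-3) σ.1) n j := by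
  unfold ΦE
  apply pf_mkPerm
  case h1 => exact (insF_spec (H_facts (m := n-3) (by omega) σ).1 hn (Efacts n hn σ).1
    (Efacts n hn σ).2.1 (Efacts n hn σ).2.2 (H_facts (m := n-3) (by omega) σ).2.1).lt
  case h2 => exact (insF_spec (H_facts (m := n-3) (by omega) σ).1 hn (Efacts n hn σ).1
    (Efacts n hn σ).2.1 (Efacts n hn σ).2.2 (H_facts (m := n-3) (by omega) σ).2.1).inj
  case hj => exact hj

end ValLemmas

section Del
variable {n : ℕ} {f : ℕ → ℕ}

/-- positions other than `0, t+1, t+2` carry values `≥ 3` -/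
lemma other_ge {t : ℕ} (hs : Spec n f) (h2 : f 0 = 2) (ht5 : t + 5 ≤ n)
    (hblock : (f t = 3 ∧ f (t+1) = 0 ∧ f (t+2) = 1 ∧ f (t+3) = 4) ∨
              (f t = 4 ∧ f (t+1) = 1 ∧ f (t+2) = 0 ∧ f (t+3) = 3)) :
    ∀ j, j < n → j ≠ 0 → j ≠ t+1 → j ≠ t+2 → 3 ≤ f j := by
  intro j hj hj0 hj1 hj2
  by_contra hcon
  have a2 : f j ≠ 2 := fun h => hj0 (hs.inj j hj 0 (by omega) (by rw [h, h2]))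
  rcases hblock with ⟨b0, b1, b2, b3⟩ | ⟨b0, b1, b2, b3⟩
  · have a0 : f j ≠ 0 := fun h => hj1 (hs.inj j hj (t+1) (by omega) (by rw [h, b1]))
    have a1 : f j ≠ 1 := fun h => hj2 (hs.inj j hj (t+2) (by omega) (by rw [h, b2]))
    omega
  · have a0 : f j ≠ 0 := fun h => hj2 (hs.inj j hj (t+2) (by omega) (by rw [h, b2]))
    have a1 : f j ≠ 1 := fun h => hj1 (hs.inj j hj (t+1) (by omega) (by rw [h, b1]))
    omega

/-- the sequence obtained by removing positions 0, t+1, t+2 (values 2 and {0,1}) and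
subtracting 3 -/
lemma del_spec (hs : Spec n f) (hn : 6 ≤ n) (t : ℕ) (ht2 : 2 ≤ t) (ht5 : t + 5 ≤ n)
    (h2 : f 0 = 2)
    (hblock : (f t = 3 ∧ f (t+1) = 0 ∧ f (t+2) = 1 ∧ f (t+3) = 4) ∨
              (f t = 4 ∧ f (t+1) = 1 ∧ f (t+2) = 0 ∧ f (t+3) = 3)) :
    Spec (n-3) (fun i => if i < n - 3 then (if i + 1 ≤ t then f (i+1) - 3 else f (i+3) - 3)
      else i) := by
  have hot := other_ge hs h2 ht5 hblock
  have hval : ∀ i, i < n - 3 → i + 1 ≤ t → 3 ≤ f (i+1) ∧ f (i+1) < n := by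
    intro i hi h
    exact ⟨hot (i+1) (by omega) (by omega) (by omega) (by omega), hs.lt (i+1) (by omega)⟩
  have hval' : ∀ i, i < n - 3 → t ≤ i → 3 ≤ f (i+3) ∧ f (i+3) < n := by
    intro i hi hti
    exact ⟨hot (i+3) (by omega) (by omega) (by omega) (by omega), hs.lt (i+3) (by omega)⟩
  refine ⟨?_, ?_, ?_, ?_⟩
  · intro i hi
    rw [if_pos hi]
    by_cases h : i + 1 ≤ t
    · rw [if_pos h]; have := hval i hi h; omega
    · rw [if_neg h]; have := hval' i hi; omega
  · intro i hi j hj hij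
    by_cases h1 : i < n - 3 <;> by_cases h2' : j < n - 3
    · rw [if_pos h1, if_pos h2'] at hij
      by_cases a : i + 1 ≤ t <;> by_cases b : j + 1 ≤ t
      · rw [if_pos a, if_pos b] at hij
        have vi := hval i h1 a; have vj := hval j h2' b
        have := hs.inj (i+1) (by omega) (j+1) (by omega) (by omega); omega
      · rw [if_pos a, if_neg b] at hij
        have vi := hval i h1 a; have vj := hval' j h2' (by omega)
        have := hs.inj (i+1) (by omega) (j+3) (by omega) (by omega); omega
      · rw [if_neg a, if_pos b] at hij
        have vi := hval' i h1 (by omega); have vj := hval j h2' b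
        have := hs.inj (i+3) (by omega) (j+1) (by omega) (by omega); omega
      · rw [if_neg a, if_neg b] at hij
        have vi := hval' i h1 (by omega); have vj := hval' j h2' (by omega)
        have := hs.inj (i+3) (by omega) (j+3) (by omega) (by omega); omega
    · rw [if_pos h1, if_neg h2'] at hij
      by_cases a : i + 1 ≤ t
      · rw [if_pos a] at hij; have vi := hval i h1 a; omega
      · rw [if_neg a] at hij; have vi := hval' i h1 (by omega); omega
    · rw [if_neg h1, if_pos h2'] at hij
      by_cases b : j + 1 ≤ t
      · rw [if_pos b] at hij; have vj := hval j h2' b; omega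
      · rw [if_neg b] at hij; have vj := hval' j h2' (by omega); omega
    · rw [if_neg h1, if_neg h2'] at hij; omega
  · intro v hv
    obtain ⟨j, hj, hjv⟩ := hs.surj (v+3) (by omega)
    have hj0 : j ≠ 0 := by intro h; rw [h] at hjv; omega
    have hjt1 : j ≠ t + 1 := by
      intro h; rw [h] at hjv
      rcases hblock with ⟨b0, b1, b2, b3⟩ | ⟨b0, b1, b2, b3⟩ <;> omega
    have hjt2 : j ≠ t + 2 := by
      intro h; rw [h] at hjv
      rcases hblock with ⟨b0, b1, b2, b3⟩ | ⟨b0, b1, b2, b3⟩ <;> omega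
    by_cases hjt : j ≤ t
    · refine ⟨j - 1, by omega, ?_⟩
      rw [if_pos (show j - 1 < n - 3 by omega), if_pos (show j - 1 + 1 ≤ t by omega),
        (by omega : j - 1 + 1 = j)]
      omega
    · refine ⟨j - 3, by omega, ?_⟩
      rw [if_pos (show j - 3 < n - 3 by omega), if_neg (show ¬ (j - 3 + 1 ≤ t) by omega),
        (by omega : j - 3 + 3 = j)]
      omega
  · intro i hi
    simp only
    rw [if_pos (show i < n - 3 by omega), if_pos (show i + 1 < n - 3 by omega)]
    by_cases a : i + 2 ≤ t
    · rw [if_pos (show i + 1 ≤ t by omega), if_pos (show i + 1 + 1 ≤ t by omega)]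
      have hb := hs.bnd (i+1) (by omega)
      have v1 := hval i (by omega) (by omega)
      have v2 := hval (i+1) (by omega) (by omega)
      omega
    · by_cases b : i + 1 ≤ t
      · have hit : i + 1 = t := by omega
        rw [if_pos b, if_neg (show ¬ (i + 1 + 1 ≤ t) by omega)]
        rw [hit]
        rcases hblock with ⟨b0, b1, b2, b3⟩ | ⟨b0, b1, b2, b3⟩ <;> omega
      · rw [if_neg b, if_neg (show ¬ (i + 1 + 1 ≤ t) by omega)]
        have hb := hs.bnd (i+3) (by omega)
        have v1 := hval' i (by omega) (by omega)
        have v2 := hval' (i+1) (by omega) (by omega)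
        rw [(by omega : i + 1 + 3 = i + 3 + 1)]
        omega
end Del

section Main
variable (n : ℕ) (hn : 6 ≤ n)
include hn

lemma A1 (σ : FSub (n-3)) : pf n (ΦA n hn σ).1 1 = 1 := by
  rw [ΦA_pf n hn σ 1 (by omega), glueF_pre _ _ _ _ 1 (by omega)]; rfl
lemma B1 (σ : GSub (n-3)) : pf n (ΦB n hn σ).1 1 = 0 := by
  rw [ΦB_pf n hn σ 1 (by omega), glueF_pre _ _ _ _ 1 (by omega)]; rfl
lemma D1 (σ : FSub (n-4)) : pf n (ΦD n hn σ).1 1 = 3 := by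
  rw [ΦD_pf n hn σ 1 (by omega), glueF_pre _ _ _ _ 1 (by omega)]; rfl
lemma C1 (σ : GSub (n-5)) : pf n (ΦC n hn σ).1 1 = 4 := by
  rw [ΦC_pf n hn σ 1 (by omega), glueF_pre _ _ _ _ 1 (by omega)]; rfl
lemma E1 (σ : HSub (n-3)) : pf n (ΦE n hn σ).1 1 = 5 := by
  rw [ΦE_pf n hn σ 1 (by omega), insF_mid 1 (by omega) (by omega)]
  simp only [Nat.sub_self]
  have := (H_facts (m := n-3) (by omega) σ).2.1
  omega

lemma injA (σ τ : FSub (n-3)) (h : ΦA n hn σ = ΦA n hn τ) : σ = τ := by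
  have hf : ∀ j, j < n → glueF 3 preA (pf (n-3) σ.1) n j = glueF 3 preA (pf (n-3) τ.1) n j := by
    intro j hj
    rw [← ΦA_pf n hn σ j hj, ← ΦA_pf n hn τ j hj, h]
  apply Subtype.ext
  apply pf_ext
  intro i hi
  have h3 := hf (i+3) (by omega)
  rw [glueF_tail _ _ _ _ _ (by omega) (by omega), glueF_tail _ _ _ _ _ (by omega) (by omega)] at h3
  simp only [Nat.add_sub_cancel] at h3
  omega

lemma injB (σ τ : GSub (n-3)) (h : ΦB n hn σ = ΦB n hn τ) : σ = τ := by
  have hf : ∀ j, j < n → glueF 3 preB (pf (n-3) σ.1) n j = glueF 3 preB (pf (n-3) τ.1) n j := by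
    intro j hj
    rw [← ΦB_pf n hn σ j hj, ← ΦB_pf n hn τ j hj, h]
  apply Subtype.ext
  apply pf_ext
  intro i hi
  have h3 := hf (i+3) (by omega)
  rw [glueF_tail _ _ _ _ _ (by omega) (by omega), glueF_tail _ _ _ _ _ (by omega) (by omega)] at h3
  simp only [Nat.add_sub_cancel] at h3
  omega

lemma injD (σ τ : FSub (n-4)) (h : ΦD n hn σ = ΦD n hn τ) : σ = τ := by
  have hf : ∀ j, j < n → glueF 4 preD (pf (n-4) σ.1) n j = glueF 4 preD (pf (n-4) τ.1) n j := by
    intro j hj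
    rw [← ΦD_pf n hn σ j hj, ← ΦD_pf n hn τ j hj, h]
  apply Subtype.ext
  apply pf_ext
  intro i hi
  have h3 := hf (i+4) (by omega)
  rw [glueF_tail _ _ _ _ _ (by omega) (by omega), glueF_tail _ _ _ _ _ (by omega) (by omega)] at h3
  simp only [Nat.add_sub_cancel] at h3
  omega

lemma injC (σ τ : GSub (n-5)) (h : ΦC n hn σ = ΦC n hn τ) : σ = τ := by
  have hf : ∀ j, j < n → glueF 5 preC (pf (n-5) σ.1) n j = glueF 5 preC (pf (n-5) τ.1) n j := by
    intro j hj
    rw [← ΦC_pf n hn σ j hj, ← ΦC_pf n hn τ j hj, h]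
  apply Subtype.ext
  apply pf_ext
  intro i hi
  have h3 := hf (i+5) (by omega)
  rw [glueF_tail _ _ _ _ _ (by omega) (by omega), glueF_tail _ _ _ _ _ (by omega) (by omega)] at h3
  simp only [Nat.add_sub_cancel] at h3
  omega

lemma injE (σ τ : HSub (n-3)) (h : ΦE n hn σ = ΦE n hn τ) : σ = τ := by
  have efσ := Efacts n hn σ
  have efτ := Efacts n hn τ
  have hf : ∀ j, j < n → insF (pE n hn σ) (pf (n-3) σ.1) n j
      = insF (pE n hn τ) (pf (n-3) τ.1) n j := by
    intro j hj
    rw [← ΦE_pf n hn σ j hj, ← ΦE_pf n hn τ j hj, h]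
  have hpp : pE n hn σ = pE n hn τ := by
    rcases Nat.lt_trichotomy (pE n hn σ) (pE n hn τ) with hlt | heq | hgt
    · exfalso
      have h1 := hf (pE n hn σ + 2) (by omega)
      rw [insF_p2] at h1
      rw [insF_mid (pE n hn σ + 2) (by omega) (by omega)] at h1
      rcases efσ.2.2 with ⟨u, v⟩ | ⟨u, v⟩ <;> omega
    · exact heq
    · exfalso
      have h1 := hf (pE n hn τ + 2) (by omega)
      rw [insF_p2] at h1
      rw [insF_mid (pE n hn τ + 2) (by omega) (by omega)] at h1
      rcases efτ.2.2 with ⟨u, v⟩ | ⟨u, v⟩ <;> omega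
  apply Subtype.ext
  apply pf_ext
  intro i hi
  by_cases hip : i ≤ pE n hn σ
  · have h1 := hf (i+1) (by omega)
    rw [insF_mid (i+1) (by omega) (by omega)] at h1
    rw [insF_mid (i+1) (by omega) (show i + 1 ≤ pE n hn τ + 1 by omega)] at h1
    simp only [Nat.add_sub_cancel] at h1
    omega
  · have h1 := hf (i+3) (by omega)
    rw [insF_tail (i+3) (by omega) (by omega)] at h1
    rw [insF_tail (i+3) (show pE n hn τ + 4 ≤ i + 3 by omega) (by omega)] at h1
    simp only [Nat.add_sub_cancel] at h1
    omega

end Main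

section Surj
variable (n : ℕ) (hn : 6 ≤ n)
include hn

set_option maxHeartbeats 2000000 in
lemma Φsurj (τ : HSub n) :
    (∃ σ, ΦA n hn σ = τ) ∨ (∃ σ, ΦB n hn σ = τ) ∨ (∃ σ, ΦD n hn σ = τ) ∨
    (∃ σ, ΦC n hn σ = τ) ∨ (∃ σ, ΦE n hn σ = τ) := by
  obtain ⟨hs, h0, he, hnj⟩ := H_facts (m := n) (by omega) τ
  set f := pf n τ.1 with hfdef
  rcases f1_cases hs h0 he hn with h1 | h1 | h1 | h1 | h1
  -- ============ case B : f 1 = 0 ============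
  · have hf2 := S2 hs h0 he hn hnj h1
    have hlow : ∀ j, j < n → f j < 3 → j < 3 := by
      intro j hj hfj
      rcases (by omega : f j = 0 ∨ f j = 1 ∨ f j = 2) with h | h | h
      · have := hs.inj j hj 1 (by omega) (by rw [h, h1]); omega
      · have := hs.inj j hj 2 (by omega) (by rw [h, hf2]); omega
      · have := hs.inj j hj 0 (by omega) (by rw [h, h0]); omega
    have hhigh : ∀ j, j < 3 → f j < 3 := by
      intro j hj
      rcases (by omega : j = 0 ∨ j = 1 ∨ j = 2) with rfl | rfl | rfl <;> omega
    have hgs := chop 3 (by omega) (by omega) hs hlow hhigh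
    set g := (fun i => if i < n - 3 then f (i+3) - 3 else i) with hgdef
    have hb2 : f 2 ≤ f 3 + 3 ∧ f 3 ≤ f 2 + 3 := hs.bnd 2 (by omega)
    have hf3 : 3 ≤ f 3 := by
      by_contra h
      have := hlow 3 (by omega) (by omega); omega
    have hg0 : g 0 = 0 ∨ g 0 = 1 := by
      rw [hgdef]; simp only
      rw [if_pos (show (0:ℕ) < n - 3 by omega), (show (0:ℕ)+3 = 3 from rfl)]
      omega
    have hge : g (n-3-1) = n-3-1 := by
      rw [hgdef]; simp only
      rw [if_pos (by omega), (by omega : n-3-1+3 = n-1), he]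
      omega
    refine Or.inr (Or.inl ⟨⟨mkPerm (n-3) g hgs.lt hgs.inj,
      mk_G_mem (n-3) (by omega) g hgs.lt hgs.inj hgs.bnd hg0 hge⟩, ?_⟩)
    apply Subtype.ext
    apply pf_ext
    intro j hj
    rw [← hfdef, ΦB_pf n hn _ j hj]
    by_cases hjk : j < 3
    · rw [glueF_pre _ _ _ _ j hjk]
      rcases (by omega : j = 0 ∨ j = 1 ∨ j = 2) with rfl | rfl | rfl
      · rw [h0]; rfl
      · rw [h1]; rfl
      · rw [hf2]; rfl
    · rw [glueF_tail _ _ _ _ j (by omega) hj]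
      rw [pf_mkPerm (n-3) g hgs.lt hgs.inj (j-3) (by omega)]
      rw [hgdef]; simp only
      rw [if_pos (by omega), (by omega : j - 3 + 3 = j)]
      have : ¬ (f j < 3) := fun h => absurd (hlow j hj h) (by omega)
      omega
  -- ============ case A : f 1 = 1 ============
  · obtain ⟨hf2, hf3⟩ := S1 hs h0 he hn h1
    have hlow : ∀ j, j < n → f j < 3 → j < 3 := by
      intro j hj hfj
      rcases (by omega : f j = 0 ∨ f j = 1 ∨ f j = 2) with h | h | h
      · have := hs.inj j hj 2 (by omega) (by rw [h, hf2]); omega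
      · have := hs.inj j hj 1 (by omega) (by rw [h, h1]); omega
      · have := hs.inj j hj 0 (by omega) (by rw [h, h0]); omega
    have hhigh : ∀ j, j < 3 → f j < 3 := by
      intro j hj
      rcases (by omega : j = 0 ∨ j = 1 ∨ j = 2) with rfl | rfl | rfl <;> omega
    have hgs := chop 3 (by omega) (by omega) hs hlow hhigh
    set g := (fun i => if i < n - 3 then f (i+3) - 3 else i) with hgdef
    have hg0 : g 0 = 0 := by
      rw [hgdef]; simp only
      rw [if_pos (show (0:ℕ) < n - 3 by omega), (show (0:ℕ)+3 = 3 from rfl)]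
      omega
    have hge : g (n-3-1) = n-3-1 := by
      rw [hgdef]; simp only
      rw [if_pos (by omega), (by omega : n-3-1+3 = n-1), he]
      omega
    refine Or.inl ⟨⟨mkPerm (n-3) g hgs.lt hgs.inj,
      mk_F_mem (n-3) (by omega) g hgs.lt hgs.inj hgs.bnd hg0 hge⟩, ?_⟩
    apply Subtype.ext
    apply pf_ext
    intro j hj
    rw [← hfdef, ΦA_pf n hn _ j hj]
    by_cases hjk : j < 3
    · rw [glueF_pre _ _ _ _ j hjk]
      rcases (by omega : j = 0 ∨ j = 1 ∨ j = 2) with rfl | rfl | rfl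
      · rw [h0]; rfl
      · rw [h1]; rfl
      · rw [hf2]; rfl
    · rw [glueF_tail _ _ _ _ j (by omega) hj]
      rw [pf_mkPerm (n-3) g hgs.lt hgs.inj (j-3) (by omega)]
      rw [hgdef]; simp only
      rw [if_pos (by omega), (by omega : j - 3 + 3 = j)]
      have : ¬ (f j < 3) := fun h => absurd (hlow j hj h) (by omega)
      omega
  -- ============ case D : f 1 = 3 ============
  · obtain ⟨hf2, hf3, hf4⟩ := S3 hs h0 he hn h1
    have hlow : ∀ j, j < n → f j < 4 → j < 4 := by
      intro j hj hfj
      rcases (by omega : f j = 0 ∨ f j = 1 ∨ f j = 2 ∨ f j = 3) with h | h | h | h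
      · have := hs.inj j hj 2 (by omega) (by rw [h, hf2]); omega
      · have := hs.inj j hj 3 (by omega) (by rw [h, hf3]); omega
      · have := hs.inj j hj 0 (by omega) (by rw [h, h0]); omega
      · have := hs.inj j hj 1 (by omega) (by rw [h, h1]); omega
    have hhigh : ∀ j, j < 4 → f j < 4 := by
      intro j hj
      rcases (by omega : j = 0 ∨ j = 1 ∨ j = 2 ∨ j = 3) with rfl | rfl | rfl | rfl <;> omega
    have hgs := chop 4 (by omega) (by omega) hs hlow hhigh
    set g := (fun i => if i < n - 4 then f (i+4) - 4 else i) with hgdef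
    have hg0 : g 0 = 0 := by
      rw [hgdef]; simp only
      rw [if_pos (show (0:ℕ) < n - 4 by omega), (show (0:ℕ)+4 = 4 from rfl)]
      omega
    have hge : g (n-4-1) = n-4-1 := by
      rw [hgdef]; simp only
      rw [if_pos (by omega), (by omega : n-4-1+4 = n-1), he]
      omega
    refine Or.inr (Or.inr (Or.inl ⟨⟨mkPerm (n-4) g hgs.lt hgs.inj,
      mk_F_mem (n-4) (by omega) g hgs.lt hgs.inj hgs.bnd hg0 hge⟩, ?_⟩))
    apply Subtype.ext
    apply pf_ext
    intro j hj
    rw [← hfdef, ΦD_pf n hn _ j hj]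
    by_cases hjk : j < 4
    · rw [glueF_pre _ _ _ _ j hjk]
      rcases (by omega : j = 0 ∨ j = 1 ∨ j = 2 ∨ j = 3) with rfl | rfl | rfl | rfl
      · rw [h0]; rfl
      · rw [h1]; rfl
      · rw [hf2]; rfl
      · rw [hf3]; rfl
    · rw [glueF_tail _ _ _ _ j (by omega) hj]
      rw [pf_mkPerm (n-4) g hgs.lt hgs.inj (j-4) (by omega)]
      rw [hgdef]; simp only
      rw [if_pos (by omega), (by omega : j - 4 + 4 = j)]
      have : ¬ (f j < 4) := fun h => absurd (hlow j hj h) (by omega)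
      omega
  -- ============ case C : f 1 = 4 ============
  · obtain ⟨hf2, hf3, hf4⟩ := S4 hs h0 he hn h1
    have hlow : ∀ j, j < n → f j < 5 → j < 5 := by
      intro j hj hfj
      rcases (by omega : f j = 0 ∨ f j = 1 ∨ f j = 2 ∨ f j = 3 ∨ f j = 4) with h | h | h | h | h
      · have := hs.inj j hj 3 (by omega) (by rw [h, hf3]); omega
      · have := hs.inj j hj 2 (by omega) (by rw [h, hf2]); omega
      · have := hs.inj j hj 0 (by omega) (by rw [h, h0]); omega
      · have := hs.inj j hj 4 (by omega) (by rw [h, hf4]); omega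
      · have := hs.inj j hj 1 (by omega) (by rw [h, h1]); omega
    have hhigh : ∀ j, j < 5 → f j < 5 := by
      intro j hj
      rcases (by omega : j = 0 ∨ j = 1 ∨ j = 2 ∨ j = 3 ∨ j = 4) with rfl | rfl | rfl | rfl | rfl <;> omega
    have hgs := chop 5 (by omega) (by omega) hs hlow hhigh
    set g := (fun i => if i < n - 5 then f (i+5) - 5 else i) with hgdef
    have hb4 : f 4 ≤ f 5 + 3 ∧ f 5 ≤ f 4 + 3 := hs.bnd 4 (by omega)
    have hf5 : 5 ≤ f 5 := by
      by_contra h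
      have := hlow 5 (by omega) (by omega); omega
    have hg0 : g 0 = 0 ∨ g 0 = 1 := by
      rw [hgdef]; simp only
      rw [if_pos (show (0:ℕ) < n - 5 by omega), (show (0:ℕ)+5 = 5 from rfl)]
      omega
    have hge : g (n-5-1) = n-5-1 := by
      rw [hgdef]; simp only
      rw [if_pos (by omega), (by omega : n-5-1+5 = n-1), he]
      omega
    refine Or.inr (Or.inr (Or.inr (Or.inl ⟨⟨mkPerm (n-5) g hgs.lt hgs.inj,
      mk_G_mem (n-5) (by omega) g hgs.lt hgs.inj hgs.bnd hg0 hge⟩, ?_⟩)))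
    apply Subtype.ext
    apply pf_ext
    intro j hj
    rw [← hfdef, ΦC_pf n hn _ j hj]
    by_cases hjk : j < 5
    · rw [glueF_pre _ _ _ _ j hjk]
      rcases (by omega : j = 0 ∨ j = 1 ∨ j = 2 ∨ j = 3 ∨ j = 4) with rfl | rfl | rfl | rfl | rfl
      · rw [h0]; rfl
      · rw [h1]; rfl
      · rw [hf2]; rfl
      · rw [hf3]; rfl
      · rw [hf4]; rfl
    · rw [glueF_tail _ _ _ _ j (by omega) hj]
      rw [pf_mkPerm (n-5) g hgs.lt hgs.inj (j-5) (by omega)]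
      rw [hgdef]; simp only
      rw [if_pos (by omega), (by omega : j - 5 + 5 = j)]
      have : ¬ (f j < 5) := fun h => absurd (hlow j hj h) (by omega)
      omega
  -- ============ case E : f 1 = 5 ============
  · obtain ⟨t, ht2, ht5, hblock⟩ := S5 hs h0 he hn h1
    have hot := other_ge hs h0 ht5 hblock
    have hgs := del_spec hs hn t ht2 ht5 h0 hblock
    set g := (fun i => if i < n - 3 then (if i + 1 ≤ t then f (i+1) - 3 else f (i+3) - 3)
      else i) with hgdef
    have hg0 : g 0 = 2 := by
      rw [hgdef]; simp only
      rw [if_pos (show (0:ℕ) < n - 3 by omega), if_pos (show 0 + 1 ≤ t by omega),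
        (show (0:ℕ)+1 = 1 from rfl)]
      omega
    have hge : g (n-3-1) = n-3-1 := by
      rw [hgdef]; simp only
      rw [if_pos (by omega), if_neg (show ¬ (n-3-1+1 ≤ t) by omega),
        (by omega : n-3-1+3 = n-1), he]
      omega
    have hgt1 : g (t-1) = f t - 3 := by
      rw [hgdef]; simp only
      rw [if_pos (by omega), if_pos (show t-1+1 ≤ t by omega), (by omega : t-1+1 = t)]
    have hgt2 : g t = f (t+3) - 3 := by
      rw [hgdef]; simp only
      rw [if_pos (by omega), if_neg (show ¬ (t+1 ≤ t) by omega)]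
    have hjoker : g 1 ≠ 0 ∨ g 2 ≠ 3 := by
      by_cases ht : t = 2
      · rcases hblock with ⟨b0, b1, b2, b3⟩ | ⟨b0, b1, b2, b3⟩
        · right
          rw [(by omega : (2:ℕ) = t), hgt2]
          omega
        · left
          rw [(by omega : (1:ℕ) = t - 1), hgt1]
          omega
      · left
        have hg1 : g 1 = f 2 - 3 := by
          rw [hgdef]; simp only
          rw [if_pos (by omega), if_pos (show 1+1 ≤ t by omega),
            (show (1:ℕ)+1 = 2 from rfl)]
        rw [hg1]
        have hf2ge : 3 ≤ f 2 := hot 2 (by omega) (by omega) (by omega) (by omega)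
        intro hcon
        have hf23 : f 2 = 3 := by omega
        rcases hblock with ⟨b0, b1, b2, b3⟩ | ⟨b0, b1, b2, b3⟩
        · have := hs.inj 2 (by omega) t (by omega) (by rw [hf23, b0]); omega
        · have := hs.inj 2 (by omega) (t+3) (by omega) (by rw [hf23, b3]); omega
    have hσmem := mk_H_mem (n-3) (by omega) g hgs.lt hgs.inj hgs.bnd hg0 hge hjoker
    refine Or.inr (Or.inr (Or.inr (Or.inr ⟨⟨mkPerm (n-3) g hgs.lt hgs.inj, hσmem⟩, ?_⟩)))
    set σE : HSub (n-3) := ⟨mkPerm (n-3) g hgs.lt hgs.inj, hσmem⟩ with hσdef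
    have hpf : ∀ x, x < n - 3 → pf (n-3) σE.1 x = g x := by
      intro x hx
      exact pf_mkPerm (n-3) g hgs.lt hgs.inj x hx
    obtain ⟨ep1, ep2, epair⟩ := Efacts n hn σE
    rw [hpf (pE n hn σE) (by omega), hpf (pE n hn σE + 1) (by omega)] at epair
    have hpE : pE n hn σE = t - 1 := by
      rcases hblock with ⟨b0, b1, b2, b3⟩ | ⟨b0, b1, b2, b3⟩
      · have z1 : g (t-1) = 0 := by rw [hgt1]; omega
        have z2 : g t = 1 := by rw [hgt2]; omega
        rcases epair with ⟨u, v⟩ | ⟨u, v⟩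
        · exact hgs.inj _ (by omega) (t-1) (by omega) (by rw [u, z1])
        · have e1 : pE n hn σE = t := hgs.inj _ (by omega) t (by omega) (by rw [u, z2])
          have e2 : pE n hn σE + 1 = t - 1 :=
            hgs.inj _ (by omega) (t-1) (by omega) (by rw [v, z1])
          omega
      · have z1 : g (t-1) = 1 := by rw [hgt1]; omega
        have z2 : g t = 0 := by rw [hgt2]; omega
        rcases epair with ⟨u, v⟩ | ⟨u, v⟩
        · have e1 : pE n hn σE = t := hgs.inj _ (by omega) t (by omega) (by rw [u, z2])
          have e2 : pE n hn σE + 1 = t - 1 :=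
            hgs.inj _ (by omega) (t-1) (by omega) (by rw [v, z1])
          omega
        · exact hgs.inj _ (by omega) (t-1) (by omega) (by rw [u, z1])
    apply Subtype.ext
    apply pf_ext
    intro j hj
    rw [← hfdef, ΦE_pf n hn σE j hj, hpE]
    rcases Nat.eq_zero_or_pos j with rfl | hj0
    · rw [insF_0]; omega
    by_cases hjt : j ≤ t
    · rw [insF_mid j (by omega) (by omega)]
      rw [hpf (j-1) (by omega)]
      rw [hgdef]; simp only
      rw [if_pos (by omega), if_pos (show j-1+1 ≤ t by omega), (by omega : j-1+1 = j)]
      have := hot j hj (by omega) (by omega) (by omega)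
      omega
    by_cases hjt1 : j = t + 1
    · subst hjt1
      rw [(by omega : t + 1 = (t-1) + 2), insF_p2]
      rw [hpf (t-1) (by omega), hgt1]
      rcases hblock with ⟨b0, b1, b2, b3⟩ | ⟨b0, b1, b2, b3⟩ <;>
        rw [(by omega : t - 1 + 2 = t + 1)] <;> omega
    by_cases hjt2 : j = t + 2
    · subst hjt2
      rw [(by omega : t + 2 = (t-1) + 3), insF_p3]
      rw [(by omega : t - 1 + 1 = t), hpf t (by omega), hgt2]
      rcases hblock with ⟨b0, b1, b2, b3⟩ | ⟨b0, b1, b2, b3⟩ <;>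
        rw [(by omega : t - 1 + 3 = t + 2)] <;> omega
    · rw [insF_tail j (by omega) hj]
      rw [hpf (j-3) (by omega)]
      rw [hgdef]; simp only
      rw [if_pos (by omega), if_neg (show ¬ (j-3+1 ≤ t) by omega), (by omega : j-3+3 = j)]
      have := hot j hj (by omega) (by omega) (by omega)
      omega

end Surj

theorem H_recurrence' (n : ℕ) (hn : 6 ≤ n) :
    numH n = numF (n - 3) + numG (n - 3) + numF (n - 4) + numG (n - 5) + numH (n - 3) := by
  classical
  have hbij : Function.Bijective
      (Sum.elim (ΦA n hn) (Sum.elim (ΦB n hn) (Sum.elim (ΦD n hn)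
        (Sum.elim (ΦC n hn) (ΦE n hn)))) :
        FSub (n-3) ⊕ GSub (n-3) ⊕ FSub (n-4) ⊕ GSub (n-5) ⊕ HSub (n-3) → HSub n) := by
    constructor
    · intro x y h
      rcases x with a | b | d | c | e <;> rcases y with a' | b' | d' | c' | e' <;>
        simp only [Sum.elim_inl, Sum.elim_inr] at h
      all_goals try exact congrArg Sum.inl (injA n hn _ _ h)
      all_goals try exact congrArg Sum.inr (congrArg Sum.inl (injB n hn _ _ h))
      all_goals try exact congrArg Sum.inr (congrArg Sum.inr (congrArg Sum.inl (injD n hn _ _ h)))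
      all_goals try exact congrArg Sum.inr (congrArg Sum.inr (congrArg Sum.inr
        (congrArg Sum.inl (injC n hn _ _ h))))
      all_goals try exact congrArg Sum.inr (congrArg Sum.inr (congrArg Sum.inr
        (congrArg Sum.inr (injE n hn _ _ h))))
      all_goals exfalso
      all_goals have h1 := congrArg (fun z : HSub n => pf n z.1 1) h
      all_goals try rw [A1 n hn] at h1
      all_goals try rw [B1 n hn] at h1
      all_goals try rw [D1 n hn] at h1
      all_goals try rw [C1 n hn] at h1
      all_goals try rw [E1 n hn] at h1
      all_goals omega
    · intro τ
      rcases Φsurj n hn τ with ⟨σ, hσ⟩ | ⟨σ, hσ⟩ | ⟨σ, hσ⟩ | ⟨σ, hσ⟩ | ⟨σ, hσ⟩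
      · exact ⟨Sum.inl σ, hσ⟩
      · exact ⟨Sum.inr (Sum.inl σ), hσ⟩
      · exact ⟨Sum.inr (Sum.inr (Sum.inl σ)), hσ⟩
      · exact ⟨Sum.inr (Sum.inr (Sum.inr (Sum.inl σ))), hσ⟩
      · exact ⟨Sum.inr (Sum.inr (Sum.inr (Sum.inr σ))), hσ⟩
  have hcard := Nat.card_eq_of_bijective _ hbij
  rw [Nat.card_sum, Nat.card_sum, Nat.card_sum, Nat.card_sum] at hcard
  show Nat.card (HSub n) = Nat.card (FSub (n-3)) + Nat.card (GSub (n-3))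
    + Nat.card (FSub (n-4)) + Nat.card (GSub (n-5)) + Nat.card (HSub (n-3))
  omega

end HRec

theorem H_recurrence (n : ℕ) (hn : 6 ≤ n) :
    numH n = numF (n - 3) + numG (n - 3) + numF (n - 4) + numG (n - 5) + numH (n - 3) :=
  HRec.H_recurrence' n hn
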